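/- Let {E_k}_{k=1,…,M} be positive semidefinite operators on ℂ^D with Σ_k E_k = 1 (a POVM), and consider the 'rawest' implementation with transformation operators A_k = √E_k (the positive semidefinite square root of E_k). Then for every density matrix ρ on ℂ^D, the eigenvalue vector of Σ_k √E_k ρ √E_k is majorized by the eigenvalue vector of ρ: λ(Σ_k √E_k ρ √E_k) ≺ λ(ρ). -/

import Mathlib

open Matrix BigOperators
open scoped ComplexOrder

/-- The sum of the `k` largest entries of `x`, expressed as the supremum of the
sums of `x` over all subsets of cardinality `k`. -/
noncomputable def kMaxSum {D : ℕ} (x : Fin D → ℝ) (k : ℕ) : ℝ :=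
  sSup ((fun A : Finset (Fin D) => ∑ i ∈ A, x i) '' {A : Finset (Fin D) | A.card = k})

/-- `x` is majorized by `y` (`x ≺ y`): every partial sum of the `k` largest
entries of `x` is at most the corresponding sum for `y`, and the total sums
coincide. -/
def MajorizedBy {D : ℕ} (x y : Fin D → ℝ) : Prop :=
  (∀ k, k ≤ D → kMaxSum x k ≤ kMaxSum y k) ∧ (∑ i, x i = ∑ i, y i)

/-- The positive semidefinite square root of a positive semidefinite matrix, as defined
in the older Mathlib (`Matrix.PosSemidef.sqrt`). -/
noncomputable def Matrix.PosSemidef.sqrt {n 𝕜 : Type*} [Fintype n] [DecidableEq n] [RCLike 𝕜]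
    {A : Matrix n n 𝕜} (hA : A.PosSemidef) : Matrix n n 𝕜 :=
  hA.1.eigenvectorUnitary.1 * diagonal ((↑) ∘ (Real.sqrt ∘ hA.1.eigenvalues)) *
    (star hA.1.eigenvectorUnitary : Matrix n n 𝕜)

lemma sqrt_conjTranspose_aux {D : ℕ} {A : Matrix (Fin D) (Fin D) ℂ} (hA : A.PosSemidef) :
    (Matrix.PosSemidef.sqrt hA)ᴴ = Matrix.PosSemidef.sqrt hA := by
  unfold Matrix.PosSemidef.sqrt
  simp [Matrix.conjTranspose_mul, Matrix.star_eq_conjTranspose, Matrix.diagonal_conjTranspose,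
    mul_assoc]
  congr 3
  funext i
  simp

lemma sqrt_mul_self_aux {D : ℕ} {A : Matrix (Fin D) (Fin D) ℂ} (hA : A.PosSemidef) :
    Matrix.PosSemidef.sqrt hA * Matrix.PosSemidef.sqrt hA = A := by
  have hUU : star (hA.1.eigenvectorUnitary : Matrix (Fin D) (Fin D) ℂ) *
      (hA.1.eigenvectorUnitary : Matrix (Fin D) (Fin D) ℂ) = 1 := Unitary.coe_star_mul_self _
  conv_rhs => rw [hA.1.spectral_theorem, Unitary.conjStarAlgAut_apply]
  unfold Matrix.PosSemidef.sqrt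
  simp only [mul_assoc]
  rw [← mul_assoc (star _) (hA.1.eigenvectorUnitary : Matrix (Fin D) (Fin D) ℂ), hUU, one_mul,
    ← mul_assoc (diagonal _) (diagonal _), diagonal_mul_diagonal]
  congr 3
  funext i
  simp only [Function.comp]
  rw [← RCLike.ofReal_mul, Real.mul_self_sqrt (hA.eigenvalues_nonneg i)]

section Aux

variable {D : ℕ}

lemma kMaxSum_le_aux {k : ℕ} (hk : k ≤ D) (x : Fin D → ℝ) (c : ℝ)
    (h : ∀ S : Finset (Fin D), S.card = k → ∑ i ∈ S, x i ≤ c) : kMaxSum x k ≤ c := by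
  obtain ⟨T, -, hT⟩ := Finset.exists_subset_card_eq (s := (Finset.univ : Finset (Fin D)))
    (n := k) (by simpa using hk)
  refine csSup_le ⟨_, ⟨T, hT, rfl⟩⟩ ?_
  rintro - ⟨S, hS, rfl⟩
  exact h S hS

lemma le_kMaxSum_aux {k : ℕ} (x : Fin D → ℝ) (S : Finset (Fin D)) (hS : S.card = k) :
    ∑ i ∈ S, x i ≤ kMaxSum x k := by
  refine le_csSup ?_ ⟨S, hS, rfl⟩
  exact (Set.toFinite _).image _ |>.bddAbove

lemma lp_lemma_aux {k : ℕ} (hk : k ≤ D) (x t : Fin D → ℝ)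
    (ht0 : ∀ i, 0 ≤ t i) (ht1 : ∀ i, t i ≤ 1) (hts : ∑ i, t i = k) :
    ∑ i, t i * x i ≤ kMaxSum x k := by
  have hne : ((Finset.univ : Finset (Finset (Fin D))).filter (fun A => A.card = k)).Nonempty := by
    obtain ⟨T, -, hT⟩ := Finset.exists_subset_card_eq (s := (Finset.univ : Finset (Fin D)))
      (n := k) (by simpa using hk)
    exact ⟨T, by simp [hT]⟩
  obtain ⟨S, hSmem, hSmax⟩ := Finset.exists_max_image _ (fun A : Finset (Fin D) => ∑ i ∈ A, x i) hne
  have hScard : S.card = k := by simpa using hSmem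
  have hSmax' : ∀ T : Finset (Fin D), T.card = k → ∑ i ∈ T, x i ≤ ∑ i ∈ S, x i := by
    intro T hT; exact hSmax T (by simp [hT])
  have key : ∑ i, t i * x i ≤ ∑ i ∈ S, x i := by
    rcases Nat.eq_zero_or_pos k with hk0 | hkpos
    · subst hk0
      have hall : ∀ i ∈ Finset.univ, t i = 0 := by
        intro i _
        have := (Finset.sum_eq_zero_iff_of_nonneg (fun j _ => ht0 j)).1 (by simpa using hts) i
        simpa using this
      have h1 : ∑ i, t i * x i = 0 := Finset.sum_eq_zero (fun i hi => by rw [hall i hi, zero_mul])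
      have h2 : S = ∅ := Finset.card_eq_zero.1 hScard
      simp [h1, h2]
    · have hSne : S.Nonempty := Finset.card_pos.1 (hScard ▸ hkpos)
      obtain ⟨i₀, hi₀S, hi₀min⟩ := Finset.exists_min_image S x hSne
      set c := x i₀ with hc
      have hout : ∀ j, j ∉ S → x j ≤ c := by
        intro j hj
        have hins : (insert j (S.erase i₀)).card = k := by
          rw [Finset.card_insert_of_notMem (fun h => hj (Finset.mem_of_mem_erase h)),
            Finset.card_erase_of_mem hi₀S, hScard]
          omega
        have h1 := hSmax' _ hins
        rw [Finset.sum_insert (fun h => hj (Finset.mem_of_mem_erase h))] at h1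
        have h2 : ∑ i ∈ S, x i = x i₀ + ∑ i ∈ S.erase i₀, x i :=
          (Finset.add_sum_erase S x hi₀S).symm
        linarith
      set s : Fin D → ℝ := fun i => if i ∈ S then 1 else 0 with hs
      have hsx : ∑ i, s i * x i = ∑ i ∈ S, x i := by
        have : ∀ i ∈ Finset.univ, s i * x i = if i ∈ S then x i else 0 := by
          intro i _; simp only [hs]; split <;> simp
        rw [Finset.sum_congr rfl this, Finset.sum_ite_mem, Finset.univ_inter]
      have hss : ∑ i, s i = (k : ℝ) := by
        have : ∀ i ∈ Finset.univ, s i = if i ∈ S then (1:ℝ) else 0 := fun i _ => rfl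
        rw [Finset.sum_congr rfl this, Finset.sum_ite_mem, Finset.univ_inter,
          Finset.sum_const, hScard]
        simp
      have hterm : ∀ i ∈ Finset.univ, (t i - s i) * (x i - c) ≤ 0 := by
        intro i _
        by_cases hiS : i ∈ S
        · have h1 : t i - s i ≤ 0 := by simp [hs, hiS]; linarith [ht1 i]
          have h2 : 0 ≤ x i - c := by linarith [hi₀min i hiS]
          exact mul_nonpos_of_nonpos_of_nonneg h1 h2
        · have h1 : 0 ≤ t i - s i := by simp [hs, hiS]; linarith [ht0 i]
          have h2 : x i - c ≤ 0 := by linarith [hout i hiS]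
          exact mul_nonpos_of_nonneg_of_nonpos h1 h2
      have hsum := Finset.sum_nonpos hterm
      rw [Finset.sum_congr rfl (fun i _ => (by ring :
          (t i - s i) * (x i - c) = (t i * x i - s i * x i - c * t i) + c * s i)),
        Finset.sum_add_distrib, Finset.sum_sub_distrib, Finset.sum_sub_distrib,
        ← Finset.mul_sum, ← Finset.mul_sum, hts, hss, hsx] at hsum
      linarith
  exact key.trans (le_kMaxSum_aux x S hScard)

lemma trace_mul_eigen_aux {A : Matrix (Fin D) (Fin D) ℂ} (hA : A.IsHermitian)
    (Q : Matrix (Fin D) (Fin D) ℂ) :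
    (Q * A).trace = ∑ i, (star (hA.eigenvectorUnitary : Matrix (Fin D) (Fin D) ℂ) * Q *
      (hA.eigenvectorUnitary : Matrix (Fin D) (Fin D) ℂ)) i i * (hA.eigenvalues i : ℂ) := by
  set U : Matrix (Fin D) (Fin D) ℂ := (hA.eigenvectorUnitary : Matrix (Fin D) (Fin D) ℂ) with hU
  conv_lhs => rw [hA.spectral_theorem, Unitary.conjStarAlgAut_apply]
  rw [show Q * ((U * diagonal (RCLike.ofReal ∘ hA.eigenvalues)) * star U)
      = (Q * U * diagonal (RCLike.ofReal ∘ hA.eigenvalues)) * star U by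
    simp [mul_assoc]]
  rw [trace_mul_comm, ← mul_assoc, ← mul_assoc]
  simp [Matrix.trace, Matrix.diag, Matrix.mul_diagonal, Function.comp]

lemma psd_diag_aux {B : Matrix (Fin D) (Fin D) ℂ} (hB : B.PosSemidef) (i : Fin D) :
    0 ≤ (B i i).re ∧ (B i i).im = 0 := by
  have h := hB.dotProduct_mulVec_nonneg (Pi.single i 1)
  have : star (Pi.single i 1 : Fin D → ℂ) ⬝ᵥ (B *ᵥ Pi.single i 1) = B i i := by
    simp [Matrix.mulVec_single, dotProduct, Pi.single_apply]
  rw [this] at h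
  exact ⟨(Complex.le_def.1 h).1, ((Complex.le_def.1 h).2).symm⟩

lemma sum_eigenvalues_eq_trace_aux {A : Matrix (Fin D) (Fin D) ℂ} (hA : A.IsHermitian) :
    (∑ i, (hA.eigenvalues i : ℂ)) = A.trace := by
  conv_rhs => rw [hA.spectral_theorem, Unitary.conjStarAlgAut_apply]
  rw [trace_mul_comm, ← mul_assoc, Unitary.coe_star_mul_self, one_mul, trace_diagonal]
  rfl

lemma re_trace_le_aux {A Q : Matrix (Fin D) (Fin D) ℂ} (hA : A.IsHermitian)
    (hQ : Q.PosSemidef) (hQ1 : ((1 : Matrix (Fin D) (Fin D) ℂ) - Q).PosSemidef) (k : ℕ)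
    (hk : k ≤ D) (htr : Q.trace = (k : ℂ)) :
    (Q * A).trace.re ≤ kMaxSum hA.eigenvalues k := by
  set U : Matrix (Fin D) (Fin D) ℂ := (hA.eigenvectorUnitary : Matrix (Fin D) (Fin D) ℂ) with hU
  have hUU : star U * U = 1 := Unitary.coe_star_mul_self hA.eigenvectorUnitary
  have hUU' : U * star U = 1 := Matrix.mem_unitaryGroup_iff.mp hA.eigenvectorUnitary.2
  set B : Matrix (Fin D) (Fin D) ℂ := star U * Q * U with hB
  have hBpsd : B.PosSemidef := by
    rw [hB]
    simpa [Matrix.star_eq_conjTranspose] using hQ.conjTranspose_mul_mul_same U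
  have hB1 : (1 : Matrix (Fin D) (Fin D) ℂ) - B = star U * (1 - Q) * U := by
    rw [Matrix.mul_sub, Matrix.sub_mul, mul_one, hUU, hB]
  have hB1psd : ((1 : Matrix (Fin D) (Fin D) ℂ) - B).PosSemidef := by
    rw [hB1]
    simpa [Matrix.star_eq_conjTranspose] using hQ1.conjTranspose_mul_mul_same U
  have hBtr : B.trace = Q.trace := by
    rw [hB, trace_mul_comm, ← mul_assoc, hUU', one_mul]
  set t : Fin D → ℝ := fun i => (B i i).re with ht
  have htre : (Q * A).trace.re = ∑ i, t i * hA.eigenvalues i := by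
    rw [trace_mul_eigen_aux hA Q, Complex.re_sum]
    exact Finset.sum_congr rfl fun i _ => by simp [Complex.mul_re, ht, hB, hU]
  rw [htre]
  refine lp_lemma_aux hk _ t (fun i => (psd_diag_aux hBpsd i).1) (fun i => ?_) ?_
  · have h := (psd_diag_aux hB1psd i).1
    have : ((1 : Matrix (Fin D) (Fin D) ℂ) - B) i i = 1 - B i i := by
      simp [Matrix.sub_apply, Matrix.one_apply_eq]
    rw [this] at h
    simp only [Complex.sub_re, Complex.one_re] at h
    simpa [ht] using by linarith
  · have : ∑ i, t i = B.trace.re := by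
      simp [Matrix.trace, Matrix.diag, Complex.re_sum, ht]
    rw [this, hBtr, htr]
    simp

end Aux

/-- **The `rawest` implementation of a POVM never decreases mixing.**  If
`{E k}` is a POVM (positive semidefinite operators summing to `1`) and the
transformation operators are the positive square roots `√(E k)`, then for
every density matrix `ρ` the output `Σ √(E k) ρ √(E k)` is at least as mixed
as `ρ`. -/
theorem rawest_povm_majorization {D M : ℕ}
    (E : Fin M → Matrix (Fin D) (Fin D) ℂ)
    (hE : ∀ k, (E k).PosSemidef)
    (hEsum : ∑ k, E k = 1)
    (ρ : Matrix (Fin D) (Fin D) ℂ)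
    (hρ : ρ.PosSemidef) (hρtr : ρ.trace = 1)
    (hρ2 : (∑ k, Matrix.PosSemidef.sqrt (hE k) * ρ * Matrix.PosSemidef.sqrt (hE k)).IsHermitian) :
    MajorizedBy hρ2.eigenvalues hρ.1.eigenvalues := by
  classical
  set σ : Matrix (Fin D) (Fin D) ℂ := ∑ k, (Matrix.PosSemidef.sqrt (hE k)) * ρ * (Matrix.PosSemidef.sqrt (hE k)) with hσ
  have hsqrtH : ∀ k, ((Matrix.PosSemidef.sqrt (hE k)))ᴴ = (Matrix.PosSemidef.sqrt (hE k)) := fun k => sqrt_conjTranspose_aux (hE k)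
  have hsq : ∀ k, (Matrix.PosSemidef.sqrt (hE k)) * (Matrix.PosSemidef.sqrt (hE k)) = E k := fun k => sqrt_mul_self_aux (hE k)
  -- trace of σ equals trace of ρ
  have htraceσ : σ.trace = ρ.trace := by
    rw [hσ, Matrix.trace_sum]
    have : ∀ k ∈ Finset.univ, ((Matrix.PosSemidef.sqrt (hE k)) * ρ * (Matrix.PosSemidef.sqrt (hE k))).trace = (E k * ρ).trace := by
      intro k _
      rw [trace_mul_comm, ← mul_assoc, hsq k]
    rw [Finset.sum_congr rfl this, ← Matrix.trace_sum, ← Finset.sum_mul, hEsum, one_mul]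
  constructor
  · -- the partial-sum inequalities
    intro k hk
    refine kMaxSum_le_aux hk _ _ (fun S hS => ?_)
    set U' : Matrix (Fin D) (Fin D) ℂ := (hρ2.eigenvectorUnitary : Matrix (Fin D) (Fin D) ℂ)
      with hU'
    have hUU : star U' * U' = 1 := Unitary.coe_star_mul_self hρ2.eigenvectorUnitary
    have hUU' : U' * star U' = 1 := Matrix.mem_unitaryGroup_iff.mp hρ2.eigenvectorUnitary.2
    set χ : Matrix (Fin D) (Fin D) ℂ := diagonal (fun i => if i ∈ S then (1:ℂ) else 0) with hχ
    set P : Matrix (Fin D) (Fin D) ℂ := U' * χ * star U' with hP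
    have hχpsd : χ.PosSemidef := by
      rw [hχ]
      refine Matrix.posSemidef_diagonal_iff.mpr (fun i => ?_)
      split <;> simp
    have hPpsd : P.PosSemidef := by
      rw [hP]
      simpa [Matrix.star_eq_conjTranspose] using hχpsd.mul_mul_conjTranspose_same U'
    have h1χ : (1 : Matrix (Fin D) (Fin D) ℂ) - χ
        = diagonal (fun i => 1 - if i ∈ S then (1:ℂ) else 0) := by
      rw [hχ, ← Matrix.diagonal_one, Matrix.diagonal_sub]
    have h1χpsd : ((1 : Matrix (Fin D) (Fin D) ℂ) - χ).PosSemidef := by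
      rw [h1χ]
      refine Matrix.posSemidef_diagonal_iff.mpr (fun i => ?_)
      split <;> simp
    have h1P : (1 : Matrix (Fin D) (Fin D) ℂ) - P = U' * (1 - χ) * star U' := by
      rw [Matrix.mul_sub, Matrix.sub_mul, mul_one, hUU', hP]
    have h1Ppsd : ((1 : Matrix (Fin D) (Fin D) ℂ) - P).PosSemidef := by
      rw [h1P]
      simpa [Matrix.star_eq_conjTranspose] using h1χpsd.mul_mul_conjTranspose_same U'
    have hPtr : P.trace = (S.card : ℂ) := by
      rw [hP, trace_mul_comm, ← mul_assoc, hUU, one_mul, hχ, trace_diagonal]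
      rw [Finset.sum_ite_mem, Finset.univ_inter, Finset.sum_const]
      simp
    set Q : Matrix (Fin D) (Fin D) ℂ := ∑ j, (Matrix.PosSemidef.sqrt (hE j)) * P * (Matrix.PosSemidef.sqrt (hE j)) with hQ
    have hQpsd : Q.PosSemidef := by
      rw [hQ]
      refine Finset.sum_induction _ _ (fun a b ha hb => ha.add hb) Matrix.PosSemidef.zero ?_
      intro j _
      have := hPpsd.mul_mul_conjTranspose_same (Matrix.PosSemidef.sqrt (hE j))
      rwa [hsqrtH j] at this
    have hterm : ∀ R : Matrix (Fin D) (Fin D) ℂ, ∀ j,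
        ((Matrix.PosSemidef.sqrt (hE j)) * R * (Matrix.PosSemidef.sqrt (hE j))).trace = (E j * R).trace := by
      intro R j
      rw [trace_mul_comm, ← mul_assoc, hsq j]
    have hQtr : Q.trace = (S.card : ℂ) := by
      rw [hQ, Matrix.trace_sum, Finset.sum_congr rfl (fun j _ => hterm P j),
        ← Matrix.trace_sum, ← Finset.sum_mul, hEsum, one_mul, hPtr]
    have h1Q : ((1 : Matrix (Fin D) (Fin D) ℂ) - Q).PosSemidef := by
      have hsplit : (1 : Matrix (Fin D) (Fin D) ℂ) - Q
          = ∑ j, (Matrix.PosSemidef.sqrt (hE j)) * (1 - P) * (Matrix.PosSemidef.sqrt (hE j)) := by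
        have : ∀ j ∈ Finset.univ, (Matrix.PosSemidef.sqrt (hE j)) * ((1 : Matrix (Fin D) (Fin D) ℂ) - P) * (Matrix.PosSemidef.sqrt (hE j))
            = E j - (Matrix.PosSemidef.sqrt (hE j)) * P * (Matrix.PosSemidef.sqrt (hE j)) := by
          intro j _
          rw [Matrix.mul_sub, Matrix.sub_mul, mul_one, hsq j]
        rw [Finset.sum_congr rfl this, Finset.sum_sub_distrib, hEsum, hQ]
      rw [hsplit]
      refine Finset.sum_induction _ _ (fun a b ha hb => ha.add hb) Matrix.PosSemidef.zero ?_
      intro j _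
      have := h1Ppsd.mul_mul_conjTranspose_same (Matrix.PosSemidef.sqrt (hE j))
      rwa [hsqrtH j] at this
    -- trace (P * σ) = partial sum of eigenvalues of σ over S
    have hPσ : (P * σ).trace = ((∑ i ∈ S, hρ2.eigenvalues i : ℝ) : ℂ) := by
      rw [trace_mul_eigen_aux hρ2 P]
      have hcollapse : star U' * P * U' = χ := by
        rw [hP, ← mul_assoc, ← mul_assoc, hUU, one_mul, mul_assoc, hUU, mul_one]
      rw [hcollapse]
      have : ∀ i ∈ Finset.univ, χ i i * (hρ2.eigenvalues i : ℂ)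
          = if i ∈ S then ((hρ2.eigenvalues i : ℝ) : ℂ) else 0 := by
        intro i _
        rw [hχ, Matrix.diagonal_apply_eq]
        split <;> simp
      rw [Finset.sum_congr rfl this, Finset.sum_ite_mem, Finset.univ_inter]
      push_cast
      rfl
    -- trace (Q * ρ) = trace (P * σ)
    have hQρ : (Q * ρ).trace = (P * σ).trace := by
      rw [hQ, Finset.sum_mul, Matrix.trace_sum, hσ, Matrix.mul_sum, Matrix.trace_sum]
      refine Finset.sum_congr rfl (fun j _ => ?_)
      rw [show (Matrix.PosSemidef.sqrt (hE j)) * P * (Matrix.PosSemidef.sqrt (hE j)) * ρ = ((Matrix.PosSemidef.sqrt (hE j)) * P) * ((Matrix.PosSemidef.sqrt (hE j)) * ρ) by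
        simp [mul_assoc], trace_mul_comm,
        show (Matrix.PosSemidef.sqrt (hE j)) * ρ * ((Matrix.PosSemidef.sqrt (hE j)) * P) = ((Matrix.PosSemidef.sqrt (hE j)) * ρ * (Matrix.PosSemidef.sqrt (hE j))) * P by
        simp [mul_assoc], trace_mul_comm]
    have hmain := re_trace_le_aux hρ.1 hQpsd h1Q S.card (hS ▸ hk) hQtr
    have : (∑ i ∈ S, hρ2.eigenvalues i) = (Q * ρ).trace.re := by
      rw [hQρ, hPσ, Complex.ofReal_re]
    rw [this, ← hS]
    exact hmain
  · -- total sums agree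
    have h1 := sum_eigenvalues_eq_trace_aux hρ2
    have h2 := sum_eigenvalues_eq_trace_aux hρ.1
    have : ((∑ i, hρ2.eigenvalues i : ℝ) : ℂ) = ((∑ i, hρ.1.eigenvalues i : ℝ) : ℂ) := by
      push_cast
      rw [h1, h2]
      exact htraceσ
    exact_mod_cast this
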